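/- arXiv:2505.15059 — 3 statements merged into one kernel-verified Lean document; each statement's English description precedes it below -/
import Mathlib

section
/- Let M̄ be the projected chain on [L]×[n] defined by: M̄((i,j),(i,j')) = (1−λ) ∫_{X⁰} (p_{(i,j)}(x)/P_{(i,j)}(X⁰)) · p_i(j'|x) dx for j ≠ j', M̄((i,j),(i',j)) = (λ/2) ∫_{X⁰} (p_{(i,j)}(x)/P_{(i,j)}(X⁰)) · min{ r_{i'} w_{(i',j)} p_{(i',j)}(x) / (r_i w_{(i,j)} p_{(i,j)}(x)), 1 } dx for i' = i±1 in [L], and M̄((i,j),(i,j)) = 1 − ∑_{(k,l)≠(i,j)} M̄((i,j),(k,l)), where p_i(j|x) = w_{(i,j)} p_{(i,j)}(x) / p_i(x). Then the stationary distribution of M̄ is P̄(i,j) = r_i w_{(i,j)} P_{(i,j)}(X⁰) / P([L]×X⁰), i.e., P̄ satisfies the detailed balance condition P̄(i,j) M̄((i,j),(i',j')) = P̄(i',j') M̄((i',j'),(i,j)) for all (i,j),(i',j') ∈ [L]×[n]. -/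
open MeasureTheory Finset

noncomputable section

/-- Adjacency of temperature levels: `i' = i ± 1`. -/
def adjacent {L : ℕ} (i i' : Fin L) : Prop :=
  (i' : ℕ) = (i : ℕ) + 1 ∨ (i : ℕ) = (i' : ℕ) + 1

instance {L : ℕ} (i i' : Fin L) : Decidable (adjacent i i') := by
  unfold adjacent; infer_instance

lemma key1 (c d : ℝ) (hc : 0 ≤ c) (hd : 0 ≤ d) : c * min (d / c) 1 = min d c := by
  rcases hc.eq_or_lt with h | h
  · simp [← h, min_eq_right hd]
  · rw [mul_min_of_nonneg _ _ h.le, mul_div_cancel₀ _ h.ne', mul_one]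

theorem stmt0 {X : Type*} [MeasurableSpace X] (ν : Measure X)
    (L n : ℕ) (hL : 2 ≤ L) (hn : 0 < n)
    (lam : ℝ) (hlam : lam ∈ Set.Ioo (0 : ℝ) 1)
    (r : Fin L → ℝ) (hr : ∀ i, 0 < r i) (hr1 : ∑ i, r i = 1)
    (w : Fin L → Fin n → ℝ) (hw : ∀ i j, 0 ≤ w i j) (hw1 : ∀ i, ∑ j, w i j = 1)
    -- component densities
    (pc : Fin L → Fin n → X → ℝ)
    (hpc0 : ∀ i j x, 0 ≤ pc i j x) (hpcm : ∀ i j, Measurable (pc i j))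
    (hpc1 : ∀ i j, ∫ x, pc i j x ∂ν = 1)
    (X0 : Set X) (hX0 : MeasurableSet X0)
    (hpos : ∀ i j, 0 < ∫ x in X0, pc i j x ∂ν)
    -- mixture densities
    (p : Fin L → X → ℝ) (hp : ∀ i x, p i x = ∑ j, w i j * pc i j x)
    -- `P_{(i,j)}(X⁰)`
    (PijX0 : Fin L → Fin n → ℝ) (hPij : ∀ i j, PijX0 i j = ∫ x in X0, pc i j x ∂ν)
    -- `θ = P([L] × X⁰)`
    (θ : ℝ) (hθ : θ = ∑ i, r i * ∫ x in X0, p i x ∂ν)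
    -- off-diagonal entries of the projected chain
    (Moff : Fin L × Fin n → Fin L × Fin n → ℝ)
    (hMoff : ∀ a b, Moff a b =
      if a.1 = b.1 ∧ a.2 ≠ b.2 then
        (1 - lam) * ∫ x in X0, (pc a.1 a.2 x / PijX0 a.1 a.2) *
          (w a.1 b.2 * pc a.1 b.2 x / p a.1 x) ∂ν
      else if adjacent a.1 b.1 ∧ a.2 = b.2 then
        (lam / 2) * ∫ x in X0, (pc a.1 a.2 x / PijX0 a.1 a.2) *
          min ((r b.1 * w b.1 a.2 * pc b.1 a.2 x) / (r a.1 * w a.1 a.2 * pc a.1 a.2 x)) 1 ∂ν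
      else 0)
    -- the projected chain, with diagonal entries making rows sum to one
    (Mbar : Fin L × Fin n → Fin L × Fin n → ℝ)
    (hMbar : ∀ a b, Mbar a b =
      if a = b then 1 - ∑ c ∈ Finset.univ.erase a, Moff a c else Moff a b)
    -- the claimed stationary distribution
    (Pbar : Fin L × Fin n → ℝ)
    (hPbar : ∀ a, Pbar a = r a.1 * w a.1 a.2 * PijX0 a.1 a.2 / θ) :
    ∀ a b : Fin L × Fin n, Pbar a * Mbar a b = Pbar b * Mbar b a := by

  have hPpos : ∀ i j, 0 < PijX0 i j := fun i j => (hPij i j) ▸ hpos i j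
  have keyA : ∀ (i : Fin L) (j j' : Fin n),
      r i * w i j * PijX0 i j / θ * ((1 - lam) * ∫ x in X0, (pc i j x / PijX0 i j) *
        (w i j' * pc i j' x / p i x) ∂ν)
      = (1 - lam) / θ * ∫ x in X0, r i * w i j * w i j' * (pc i j x * pc i j' x / p i x) ∂ν := by
    intro i j j'
    have h1 : r i * w i j * PijX0 i j / θ * ((1 - lam) * ∫ x in X0, (pc i j x / PijX0 i j) *
        (w i j' * pc i j' x / p i x) ∂ν)
        = (1 - lam) / θ * ((r i * w i j * PijX0 i j) * ∫ x in X0, (pc i j x / PijX0 i j) *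
        (w i j' * pc i j' x / p i x) ∂ν) := by ring
    rw [h1, ← integral_const_mul]
    congr 1
    refine integral_congr_ae (Filter.Eventually.of_forall fun x => ?_)
    dsimp only
    have hP : PijX0 i j ≠ 0 := (hPpos i j).ne'
    have hc : PijX0 i j * (pc i j x / PijX0 i j) = pc i j x := by field_simp
    calc r i * w i j * PijX0 i j * ((pc i j x / PijX0 i j) * (w i j' * pc i j' x / p i x))
        = r i * w i j * (PijX0 i j * (pc i j x / PijX0 i j)) * (w i j' * pc i j' x / p i x) := by
          ring
      _ = r i * w i j * w i j' * (pc i j x * pc i j' x / p i x) := by rw [hc]; ring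
  have keyB : ∀ (i i' : Fin L) (j : Fin n),
      r i * w i j * PijX0 i j / θ * ((lam / 2) * ∫ x in X0, (pc i j x / PijX0 i j) *
        min ((r i' * w i' j * pc i' j x) / (r i * w i j * pc i j x)) 1 ∂ν)
      = (lam / 2) / θ * ∫ x in X0, min (r i' * w i' j * pc i' j x) (r i * w i j * pc i j x) ∂ν := by
    intro i i' j
    have h1 : r i * w i j * PijX0 i j / θ * ((lam / 2) * ∫ x in X0, (pc i j x / PijX0 i j) *
        min ((r i' * w i' j * pc i' j x) / (r i * w i j * pc i j x)) 1 ∂ν)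
        = (lam / 2) / θ * ((r i * w i j * PijX0 i j) * ∫ x in X0, (pc i j x / PijX0 i j) *
        min ((r i' * w i' j * pc i' j x) / (r i * w i j * pc i j x)) 1 ∂ν) := by ring
    rw [h1, ← integral_const_mul]
    congr 1
    refine integral_congr_ae (Filter.Eventually.of_forall fun x => ?_)
    dsimp only
    have hP : PijX0 i j ≠ 0 := (hPpos i j).ne'
    have hc : PijX0 i j * (pc i j x / PijX0 i j) = pc i j x := by field_simp
    calc r i * w i j * PijX0 i j * ((pc i j x / PijX0 i j) *
          min ((r i' * w i' j * pc i' j x) / (r i * w i j * pc i j x)) 1)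
        = (r i * w i j) * (PijX0 i j * (pc i j x / PijX0 i j)) *
          min ((r i' * w i' j * pc i' j x) / (r i * w i j * pc i j x)) 1 := by ring
      _ = (r i * w i j * pc i j x) *
          min ((r i' * w i' j * pc i' j x) / (r i * w i j * pc i j x)) 1 := by rw [hc]
      _ = min (r i' * w i' j * pc i' j x) (r i * w i j * pc i j x) :=
          key1 _ _ (mul_nonneg (mul_nonneg (hr i).le (hw i j)) (hpc0 i j x))
            (mul_nonneg (mul_nonneg (hr i').le (hw i' j)) (hpc0 i' j x))
  intro a b
  by_cases hab : a = b
  · rw [hab]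
  obtain ⟨i, j⟩ := a
  obtain ⟨i', j'⟩ := b
  rw [hMbar, hMbar, if_neg hab, if_neg (Ne.symm hab), hPbar, hPbar]
  by_cases hii : i = i'
  · subst hii
    have hjj : j ≠ j' := fun h => hab (by rw [h])
    have e1 : Moff (i, j) (i, j') = (1 - lam) * ∫ x in X0, (pc i j x / PijX0 i j) *
        (w i j' * pc i j' x / p i x) ∂ν := by
      rw [hMoff]; exact if_pos ⟨rfl, hjj⟩
    have e2 : Moff (i, j') (i, j) = (1 - lam) * ∫ x in X0, (pc i j' x / PijX0 i j') *
        (w i j * pc i j x / p i x) ∂ν := by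
      rw [hMoff]; exact if_pos ⟨rfl, hjj.symm⟩
    rw [e1, e2]
    simp only
    rw [keyA, keyA]
    congr 1
    refine integral_congr_ae (Filter.Eventually.of_forall fun x => ?_)
    ring
  · by_cases hadj : adjacent i i' ∧ j = j'
    · obtain ⟨hadj, hjj⟩ := hadj
      subst hjj
      have hadj' : adjacent i' i := by unfold adjacent at *; tauto
      have e1 : Moff (i, j) (i', j) = (lam / 2) * ∫ x in X0, (pc i j x / PijX0 i j) *
          min ((r i' * w i' j * pc i' j x) / (r i * w i j * pc i j x)) 1 ∂ν := by
        rw [hMoff, if_neg (by simp), if_pos ⟨hadj, rfl⟩]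
      have e2 : Moff (i', j) (i, j) = (lam / 2) * ∫ x in X0, (pc i' j x / PijX0 i' j) *
          min ((r i * w i j * pc i j x) / (r i' * w i' j * pc i' j x)) 1 ∂ν := by
        rw [hMoff, if_neg (by simp), if_pos ⟨hadj', rfl⟩]
      rw [e1, e2]
      simp only
      rw [keyB, keyB]
      congr 1
      refine integral_congr_ae (Filter.Eventually.of_forall fun x => ?_)
      dsimp only
      rw [min_comm]
    · have e1 : Moff (i, j) (i', j') = 0 := by
        rw [hMoff, if_neg (fun h => hii h.1), if_neg hadj]
      have e2 : Moff (i', j') (i, j) = 0 := by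
        rw [hMoff, if_neg (fun h => hii h.1.symm),
          if_neg (fun h => hadj ⟨by unfold adjacent at *; tauto, h.2.symm⟩)]
      rw [e1, e2, mul_zero, mul_zero]
end
end

section
/- The ([L]×X⁰)-restricted Dirichlet form of the simulated tempering chain M satisfies E_{[L]×X⁰}(g,g) = (1−λ) ∑_{i=1}^L r_i E_{i,X⁰}(g_i,g_i) + λ E^I_{X⁰}(g,g) for every g ∈ L²([L]×X, P), where g_i(x) = g(i,x), E_{i,X⁰} is the X⁰-restricted Dirichlet form of the kernel M_i with respect to its stationary density p_i, and E^I_{X⁰}(g,g) = (1/4) ∑_{i,i'∈[L]: i'=i±1} ∫_{X⁰} (g(i,x) − g(i',x))² r_i p_i(x) min{ r_{i'} p_{i'}(x)/(r_i p_i(x)), 1 } dx. -/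
open MeasureTheory
open scoped ENNReal NNReal

noncomputable section

/-- The `S`-restricted Dirichlet form of a Markov kernel `K` with stationary measure `Pi`:
`(1/2) ∫_S ∫_S (g(b) - g(a))² Pi(da) K(a, db)`. -/
def restDirichlet {Ω : Type*} [MeasurableSpace Ω] (Pi : Measure Ω) (K : Ω → Measure Ω)
    (S : Set Ω) (g : Ω → ℝ) : ℝ :=
  (1 / 2) * ∫ a in S, (∫ b in S, (g b - g a) ^ 2 ∂(K a)) ∂Pi

/-- The stationary measure of the simulated tempering chain: density `p(i,x) = rᵢ pᵢ(x)`. -/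
def stStat {X : Type*} [MeasurableSpace X] (ν : Measure X) {L : ℕ}
    (r : Fin L → ℝ) (p : Fin L → X → ℝ) : Measure (Fin L × X) :=
  Measure.sum fun i =>
    ENNReal.ofReal (r i) • ((ν.withDensity fun x => ENNReal.ofReal (p i x)).map fun x => (i, x))

/-- Acceptance probability for a temperature swap. -/
def stAccept {X : Type*} {L : ℕ} (r : Fin L → ℝ) (p : Fin L → X → ℝ)
    (i i' : Fin L) (x : X) : ℝ :=
  min ((r i' * p i' x) / (r i * p i x)) 1

/-- The simulated tempering Markov kernel on `[L] × X`. -/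
def stKernel {X : Type*} [MeasurableSpace X] {L : ℕ} (lam : ℝ) (r : Fin L → ℝ)
    (p : Fin L → X → ℝ) (Mi : Fin L → X → Measure X) :
    Fin L × X → Measure (Fin L × X) := fun q =>
  ENNReal.ofReal (1 - lam) • ((Mi q.1 q.2).map fun y => (q.1, y))
    + ∑ i' : Fin L,
        (if adjacent q.1 i' then ENNReal.ofReal (lam / 2 * stAccept r p q.1 i' q.2) else 0) •
          Measure.dirac (i', q.2)
    + ENNReal.ofReal
        (lam - ∑ i' : Fin L, if adjacent q.1 i' then lam / 2 * stAccept r p q.1 i' q.2 else 0) •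
        Measure.dirac q

/-- The subset `[L] × X⁰` of the extended state space. -/
def levelSet {X : Type*} (L : ℕ) (X0 : Set X) : Set (Fin L × X) := {q | q.2 ∈ X0}

/-- `Pi` is a stationary measure of the kernel `K`. -/
def IsStationaryKer {Ω : Type*} [MeasurableSpace Ω] (K : Ω → Measure Ω) (Pi : Measure Ω) : Prop :=
  ∀ A : Set Ω, MeasurableSet A → ∫⁻ x, K x A ∂Pi = Pi A

/- Auxiliary lemmas -/

private lemma sq_sub_le_aux (a b : ℝ) : (a - b) ^ 2 ≤ 2 * a ^ 2 + 2 * b ^ 2 := by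
  nlinarith [sq_nonneg (a + b)]

private lemma stat_lintegral {X : Type*} [MeasurableSpace X] {K : X → Measure X}
    (hK : Measurable K) {μ : Measure X} (hstat : IsStationaryKer K μ)
    {f : X → ℝ≥0∞} (hf : Measurable f) :
    ∫⁻ x, ∫⁻ y, f y ∂(K x) ∂μ = ∫⁻ x, f x ∂μ := by
  have hb : μ.bind K = μ := by
    ext A hA
    rw [Measure.bind_apply hA hK.aemeasurable]
    exact hstat A hA
  conv_rhs => rw [← hb]
  rw [Measure.lintegral_bind hK.aemeasurable hf.aemeasurable]

private lemma restrict_finset_sum {α ι : Type*} [MeasurableSpace α] (s : Finset ι)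
    (μ : ι → Measure α) (S : Set α) :
    (∑ i ∈ s, μ i).restrict S = ∑ i ∈ s, (μ i).restrict S := by
  induction s using Finset.cons_induction with
  | empty => simp
  | cons i s hi ih => simp [Finset.sum_cons, Measure.restrict_add, ih]

theorem stmt1 {X : Type*} [MeasurableSpace X] (ν : Measure X)
    (L : ℕ) (hL : 2 ≤ L)
    (lam : ℝ) (hlam : lam ∈ Set.Ioo (0 : ℝ) 1)
    (r : Fin L → ℝ) (hr : ∀ i, 0 < r i) (hr1 : ∑ i, r i = 1)
    (p : Fin L → X → ℝ)
    (hp0 : ∀ i x, 0 ≤ p i x) (hpm : ∀ i, Measurable (p i)) (hp1 : ∀ i, ∫ x, p i x ∂ν = 1)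
    (Mi : Fin L → X → Measure X)
    (hMim : ∀ i, Measurable (Mi i))
    (hMiprob : ∀ i x, IsProbabilityMeasure (Mi i x))
    (hMistat : ∀ i, IsStationaryKer (Mi i) (ν.withDensity fun x => ENNReal.ofReal (p i x)))
    (X0 : Set X) (hX0 : MeasurableSet X0)
    (g : Fin L × X → ℝ) (hgm : Measurable g) (hg : MemLp g 2 (stStat ν r p)) :
    restDirichlet (stStat ν r p) (stKernel lam r p Mi) (levelSet L X0) g
      = (1 - lam) * ∑ i, r i *
          restDirichlet (ν.withDensity fun x => ENNReal.ofReal (p i x)) (Mi i) X0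
            (fun x => g (i, x))
        + lam * ((1 / 4) * ∑ i : Fin L, ∑ i' : Fin L,
            if adjacent i i' then
              ∫ x in X0, (g (i, x) - g (i', x)) ^ 2 * (r i * p i x) * stAccept r p i i' x ∂ν
            else 0) := by
  classical
  obtain ⟨hlam0, hlam1⟩ := hlam
  set μ : Fin L → Measure X := fun i => ν.withDensity fun x => ENNReal.ofReal (p i x) with hμdef
  set S : Set (Fin L × X) := levelSet L X0 with hSdef
  have hS : MeasurableSet S := hX0.preimage measurable_snd
  have hφemb : ∀ i : Fin L, MeasurableEmbedding (Prod.mk i : X → Fin L × X) :=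
    fun i => measurableEmbedding_prodMk_left i
  have hgim : ∀ i j : Fin L, Measurable fun x => g (j, x) :=
    fun i j => hgm.comp measurable_prodMk_left
  have hμprob : ∀ i, IsProbabilityMeasure (μ i) := by
    intro i
    constructor
    rw [hμdef]
    simp only [withDensity_apply _ MeasurableSet.univ, Measure.restrict_univ]
    rw [← ofReal_integral_eq_lintegral_ofReal (integrable_of_integral_eq_one (hp1 i))
      (Filter.Eventually.of_forall (hp0 i)), hp1 i, ENNReal.ofReal_one]
  -- square-integrability at each level
  have hpim : ∀ i : Fin L, Measurable fun x => ENNReal.ofReal (p i x) :=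
    fun i => ENNReal.measurable_ofReal.comp (hpm i)
  have hrne : ∀ i : Fin L, ENNReal.ofReal (r i) ≠ 0 := by
    intro i
    simp only [ne_eq, ENNReal.ofReal_eq_zero, not_le]
    exact hr i
  have hgsq : ∀ i : Fin L, Integrable (fun x => (g (i, x)) ^ 2) (μ i) := by
    intro i
    have hsq : Integrable (fun a => g a ^ 2) (stStat ν r p) := hg.integrable_sq
    have hle : (ENNReal.ofReal (r i) • ((μ i).map (Prod.mk i))) ≤ stStat ν r p :=
      Measure.le_sum _ i
    have h1 : Integrable (fun a => g a ^ 2)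
        (ENNReal.ofReal (r i) • ((μ i).map (Prod.mk i))) := hsq.mono_measure hle
    have h2 : Integrable (fun a => g a ^ 2) ((μ i).map (Prod.mk i)) :=
      (integrable_smul_measure (hrne i) ENNReal.ofReal_ne_top).mp h1
    exact (hφemb i).integrable_map_iff.mp h2
  -- lintegral of the square at each level is finite
  set T : Fin L → ℝ≥0∞ := fun i => ∫⁻ x, ENNReal.ofReal ((g (i, x)) ^ 2) ∂(μ i) with hTdef
  have hT : ∀ i, T i < ⊤ := by
    intro i
    have h := (hgsq i).2
    have heq : (fun x => ENNReal.ofReal ((g (i, x)) ^ 2))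
        = fun x => ‖(g (i, x)) ^ 2‖ₑ :=
      funext fun x => (Real.enorm_eq_ofReal (sq_nonneg _)).symm
    show (∫⁻ x, ENNReal.ofReal ((g (i, x)) ^ 2) ∂(μ i)) < ⊤
    rw [heq]
    exact h
  -- the kernel-integrated square
  set Cg : Fin L → X → ℝ≥0∞ :=
    fun i x => ∫⁻ y, ENNReal.ofReal ((g (i, y)) ^ 2) ∂(Mi i x) with hCgdef
  have hCgm : ∀ i, Measurable (Cg i) := by
    intro i
    haveI : ProbabilityTheory.IsMarkovKernel (⟨Mi i, hMim i⟩ : ProbabilityTheory.Kernel X X) :=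
      ⟨fun a => hMiprob i a⟩
    exact Measurable.lintegral_kernel_prod_right' (κ := ⟨Mi i, hMim i⟩)
      (((hgm.comp (measurable_const.prodMk measurable_snd)).pow_const 2).ennreal_ofReal)
  have hCgT : ∀ i, ∫⁻ x, Cg i x ∂(μ i) = T i := by
    intro i
    exact stat_lintegral (hMim i) (hMistat i)
      (((hgim i i).pow_const 2).ennreal_ofReal)
  have hCgfin : ∀ i, ∀ᵐ x ∂(μ i), Cg i x < ⊤ := by
    intro i
    exact ae_lt_top (hCgm i) (by rw [hCgT i]; exact (hT i).ne)
  have haccm : ∀ i i' : Fin L, Measurable (stAccept r p i i') := by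
    intro i i'
    exact (((hpm i').const_mul (r i')).div ((hpm i).const_mul (r i))).min measurable_const
  have hacc0 : ∀ (i i' : Fin L) (x : X), 0 ≤ stAccept r p i i' x := by
    intro i i' x
    exact le_min (div_nonneg (mul_nonneg (hr i').le (hp0 i' x))
      (mul_nonneg (hr i).le (hp0 i x))) zero_le_one
  have hacc1 : ∀ (i i' : Fin L) (x : X), stAccept r p i i' x ≤ 1 := fun i i' x => min_le_right _ _
  have haccp : ∀ (i i' : Fin L) (x : X),
      stAccept r p i i' x * p i x ≤ r i' / r i * p i' x := by
    intro i i' x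
    by_cases hz : r i * p i x = 0
    · have hq : p i x = 0 := by
        rcases mul_eq_zero.mp hz with h | h
        · exact absurd h (ne_of_gt (hr i))
        · exact h
      rw [hq, mul_zero]
      exact mul_nonneg (div_nonneg (hr i').le (hr i).le) (hp0 i' x)
    · have hqpos : 0 < p i x := by
        rcases (hp0 i x).lt_or_eq with h | h
        · exact h
        · exact absurd (by rw [← h, mul_zero]) hz
      have h1 : stAccept r p i i' x ≤ (r i' * p i' x) / (r i * p i x) := min_le_left _ _
      have h2 : stAccept r p i i' x * p i x ≤ (r i' * p i' x) / (r i * p i x) * p i x :=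
        mul_le_mul_of_nonneg_right h1 (hp0 i x)
      have h3 : p i x ≠ 0 := ne_of_gt hqpos
      have h4 : r i ≠ 0 := ne_of_gt (hr i)
      refine h2.trans_eq ?_
      field_simp
  -- the inner integral functions
  set A : Fin L → X → ℝ := fun i x => ∫ y in X0, (g (i, y) - g (i, x)) ^ 2 ∂(Mi i x) with hAdef
  set D : Fin L → X → ℝ := fun i x => ∑ i' : Fin L,
    if adjacent i i' then lam / 2 * (stAccept r p i i' x * (g (i', x) - g (i, x)) ^ 2) else 0
    with hDdef
  set F : Fin L × X → ℝ := fun a => ∫ b in S, (g b - g a) ^ 2 ∂(stKernel lam r p Mi a) with hFdef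
  -- key pointwise identity
  have keyF : ∀ i : Fin L, ∀ᵐ x ∂(μ i), x ∈ X0 → F (i, x) = (1 - lam) * A i x + D i x := by
    intro i
    filter_upwards [hCgfin i] with x hfin hx
    have hxS : ((i, x) : Fin L × X) ∈ S := hx
    set h : Fin L × X → ℝ := fun b => (g b - g (i, x)) ^ 2 with hhdef
    have hhm : Measurable h := (hgm.sub measurable_const).pow_const 2
    set m1 : Measure (Fin L × X) :=
      ENNReal.ofReal (1 - lam) • ((Mi i x).map (Prod.mk i)) with hm1def
    set m2 : Measure (Fin L × X) := ∑ i' : Fin L,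
      (if adjacent i i' then ENNReal.ofReal (lam / 2 * stAccept r p i i' x) else 0) •
        Measure.dirac (i', x) with hm2def
    set m3 : Measure (Fin L × X) := ENNReal.ofReal
      (lam - ∑ i' : Fin L, if adjacent i i' then lam / 2 * stAccept r p i i' x else 0) •
        Measure.dirac (i, x) with hm3def
    have hker : stKernel lam r p Mi (i, x) = m1 + m2 + m3 := rfl
    have hm1r : m1.restrict S
        = ENNReal.ofReal (1 - lam) • (((Mi i x).restrict X0).map (Prod.mk i)) := by
      rw [hm1def, Measure.restrict_smul, Measure.restrict_map measurable_prodMk_left hS]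
      rfl
    have hint1 : Integrable (fun y => h (i, y)) ((Mi i x).restrict X0) := by
      refine ⟨(((hgim i i).sub measurable_const).pow_const 2).aestronglyMeasurable, ?_⟩
      rw [HasFiniteIntegral]
      have hb : ∀ y, ‖h (i, y)‖ₑ
          ≤ 2 * ENNReal.ofReal ((g (i, y)) ^ 2) + 2 * ENNReal.ofReal ((g (i, x)) ^ 2) := by
        intro y
        rw [show h (i, y) = (g (i, y) - g (i, x)) ^ 2 from rfl,
          Real.enorm_eq_ofReal (sq_nonneg _)]
        refine le_trans (ENNReal.ofReal_le_ofReal (sq_sub_le_aux _ _)) ?_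
        rw [ENNReal.ofReal_add (by positivity) (by positivity)]
        refine add_le_add ?_ ?_ <;> rw [ENNReal.ofReal_mul (by norm_num : (0:ℝ) ≤ 2)] <;>
          simp
      calc ∫⁻ y, ‖h (i, y)‖ₑ ∂((Mi i x).restrict X0)
          ≤ ∫⁻ y, ‖h (i, y)‖ₑ ∂(Mi i x) :=
            lintegral_mono' Measure.restrict_le_self le_rfl
        _ ≤ ∫⁻ y, (2 * ENNReal.ofReal ((g (i, y)) ^ 2)
              + 2 * ENNReal.ofReal ((g (i, x)) ^ 2)) ∂(Mi i x) := lintegral_mono hb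
        _ = 2 * Cg i x + 2 * ENNReal.ofReal ((g (i, x)) ^ 2) := by
            rw [lintegral_add_left (((hgim i i).pow_const 2).ennreal_ofReal.const_mul 2),
              lintegral_const_mul 2 ((hgim i i).pow_const 2).ennreal_ofReal, lintegral_const,
              measure_univ, mul_one]
        _ < ⊤ := ENNReal.add_lt_top.mpr
            ⟨ENNReal.mul_lt_top (by simp) hfin,
             ENNReal.mul_lt_top (by simp) ENNReal.ofReal_lt_top⟩
    have hi1 : Integrable h (m1.restrict S) := by
      rw [hm1r]
      refine Integrable.smul_measure ?_ ENNReal.ofReal_ne_top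
      exact ((hφemb i).integrable_map_iff).mpr hint1
    have hdiracInt : ∀ c : ℝ≥0∞, c ≠ ⊤ → ∀ pt : Fin L × X,
        Integrable h ((c • Measure.dirac pt).restrict S) := by
      intro c hc pt
      rw [Measure.restrict_smul, restrict_dirac' hS]
      refine Integrable.smul_measure ?_ hc
      split
      · exact ⟨hhm.aestronglyMeasurable,
          by rw [HasFiniteIntegral, lintegral_dirac' _ hhm.enorm]; exact ENNReal.coe_lt_top⟩
      · exact integrable_zero_measure
    have hdiracVal : ∀ (c : ℝ), 0 ≤ c → ∀ pt : Fin L × X, pt ∈ S →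
        ∫ b, h b ∂((ENNReal.ofReal c • Measure.dirac pt).restrict S) = c * h pt := by
      intro c hc pt hpt
      rw [Measure.restrict_smul, restrict_dirac' hS, if_pos hpt, integral_smul_measure,
        integral_dirac' h pt hhm.stronglyMeasurable, ENNReal.toReal_ofReal hc, smul_eq_mul]
    have hi2 : Integrable h (m2.restrict S) := by
      rw [hm2def, restrict_finset_sum]
      exact integrable_finset_sum_measure.mpr fun i' _ => hdiracInt _
        (by split; exacts [ENNReal.ofReal_ne_top, ENNReal.zero_ne_top]) _
    have hi3 : Integrable h (m3.restrict S) := by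
      rw [hm3def]
      exact hdiracInt _ ENNReal.ofReal_ne_top _
    have hv1 : ∫ b, h b ∂(m1.restrict S) = (1 - lam) * A i x := by
      rw [hm1r, integral_smul_measure, ENNReal.toReal_ofReal (by linarith : (0:ℝ) ≤ 1 - lam),
        (hφemb i).integral_map, smul_eq_mul]
    have hv2 : ∫ b, h b ∂(m2.restrict S) = D i x := by
      rw [hm2def, restrict_finset_sum, integral_finset_sum_measure fun i' _ => hdiracInt _
        (by split; exacts [ENNReal.ofReal_ne_top, ENNReal.zero_ne_top]) _]
      simp only [hDdef]
      refine Finset.sum_congr rfl fun i' _ => ?_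
      by_cases ha : adjacent i i'
      · simp only [ha, if_true]
        rw [hdiracVal _ (mul_nonneg (by linarith) (hacc0 i i' x)) (i', x) hx]
        show lam / 2 * stAccept r p i i' x * (g (i', x) - g (i, x)) ^ 2 = _
        ring
      · simp only [ha, if_false, zero_smul, Measure.restrict_zero, integral_zero_measure]
    have hv3 : ∫ b, h b ∂(m3.restrict S) = 0 := by
      rw [hm3def, Measure.restrict_smul, restrict_dirac' hS, if_pos hxS,
        integral_smul_measure, integral_dirac' h _ hhm.stronglyMeasurable]
      rw [show h (i, x) = 0 by simp [hhdef], smul_zero]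
    have hFx : F (i, x) = ∫ b, h b ∂((m1 + m2 + m3).restrict S) := rfl
    rw [hFx, Measure.restrict_add, Measure.restrict_add,
      integral_add_measure (hi1.add_measure hi2) hi3, integral_add_measure hi1 hi2,
      hv1, hv2, hv3, add_zero]
  -- integrability of A
  have hAint : ∀ i, Integrable (A i) (μ i) := by
    intro i
    haveI : ProbabilityTheory.IsMarkovKernel (⟨Mi i, hMim i⟩ : ProbabilityTheory.Kernel X X) :=
      ⟨fun a => hMiprob i a⟩
    set lA : X → ℝ≥0∞ :=
      fun x => ∫⁻ y in X0, ENNReal.ofReal ((g (i, y) - g (i, x)) ^ 2) ∂(Mi i x) with hlAdef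
    have hlAm : Measurable lA := by
      refine Measurable.setLIntegral_kernel_prod_right (κ := ⟨Mi i, hMim i⟩)
        (f := fun x y => ENNReal.ofReal ((g (i, y) - g (i, x)) ^ 2)) ?_ hX0
      exact (((hgm.comp (measurable_const.prodMk measurable_snd)).sub
        (hgm.comp (measurable_const.prodMk measurable_fst))).pow_const 2).ennreal_ofReal
    have hAeq : A i = fun x => (lA x).toReal := by
      funext x
      simp only [hAdef, hlAdef]
      exact integral_eq_lintegral_of_nonneg_ae (Filter.Eventually.of_forall fun y => sq_nonneg _)
        (((hgim i i).sub measurable_const).pow_const 2).aestronglyMeasurable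
    have hbound : ∀ x, lA x ≤ 2 * Cg i x + 2 * ENNReal.ofReal ((g (i, x)) ^ 2) := by
      intro x
      have h1 : lA x ≤ ∫⁻ y, ENNReal.ofReal ((g (i, y) - g (i, x)) ^ 2) ∂(Mi i x) :=
        lintegral_mono' Measure.restrict_le_self le_rfl
      refine h1.trans ?_
      have h2 : ∀ y : X, ENNReal.ofReal ((g (i, y) - g (i, x)) ^ 2)
          ≤ 2 * ENNReal.ofReal ((g (i, y)) ^ 2) + 2 * ENNReal.ofReal ((g (i, x)) ^ 2) := by
        intro y
        refine le_trans (ENNReal.ofReal_le_ofReal (sq_sub_le_aux _ _)) ?_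
        rw [ENNReal.ofReal_add (by positivity) (by positivity)]
        refine add_le_add ?_ ?_ <;> rw [ENNReal.ofReal_mul (by norm_num : (0:ℝ) ≤ 2)] <;>
          simp
      calc ∫⁻ y, ENNReal.ofReal ((g (i, y) - g (i, x)) ^ 2) ∂(Mi i x)
          ≤ ∫⁻ y, (2 * ENNReal.ofReal ((g (i, y)) ^ 2)
              + 2 * ENNReal.ofReal ((g (i, x)) ^ 2)) ∂(Mi i x) := lintegral_mono h2
        _ = 2 * Cg i x + 2 * ENNReal.ofReal ((g (i, x)) ^ 2) := by
            rw [lintegral_add_left (((hgim i i).pow_const 2).ennreal_ofReal.const_mul 2),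
              lintegral_const_mul 2 ((hgim i i).pow_const 2).ennreal_ofReal, lintegral_const,
              measure_univ, mul_one]
    rw [hAeq]
    refine ⟨hlAm.ennreal_toReal.aestronglyMeasurable, ?_⟩
    rw [HasFiniteIntegral]
    calc ∫⁻ x, ‖(lA x).toReal‖ₑ ∂(μ i)
        ≤ ∫⁻ x, (2 * Cg i x + 2 * ENNReal.ofReal ((g (i, x)) ^ 2)) ∂(μ i) := by
          refine lintegral_mono fun x => ?_
          refine le_trans ?_ (hbound x)
          rw [Real.enorm_eq_ofReal ENNReal.toReal_nonneg]
          exact ENNReal.ofReal_toReal_le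
      _ = 2 * T i + 2 * T i := by
          rw [lintegral_add_left ((hCgm i).const_mul 2), lintegral_const_mul 2 (hCgm i),
            lintegral_const_mul 2 ((hgim i i).pow_const 2).ennreal_ofReal, hCgT i]
      _ < ⊤ := ENNReal.add_lt_top.mpr
          ⟨ENNReal.mul_lt_top (by simp) (hT i), ENNReal.mul_lt_top (by simp) (hT i)⟩
  -- integrability of the acceptance-weighted square
  have hcore : ∀ i i' : Fin L,
      Integrable (fun x => stAccept r p i i' x * (g (i', x) - g (i, x)) ^ 2) (μ i) := by
    intro i i'
    have hfm : Measurable fun x => stAccept r p i i' x * (g (i', x) - g (i, x)) ^ 2 :=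
      (haccm i i').mul (((hgim i i').sub (hgim i i)).pow_const 2)
    have hfnn : ∀ x, 0 ≤ stAccept r p i i' x * (g (i', x) - g (i, x)) ^ 2 :=
      fun x => mul_nonneg (hacc0 i i' x) (sq_nonneg _)
    refine ⟨hfm.aestronglyMeasurable, ?_⟩
    rw [HasFiniteIntegral]
    have hptw : ∀ x : X,
        ((fun x => ENNReal.ofReal (p i x)) * fun x =>
          ‖stAccept r p i i' x * (g (i', x) - g (i, x)) ^ 2‖ₑ) x
        ≤ 2 * (ENNReal.ofReal ((g (i, x)) ^ 2) * ENNReal.ofReal (p i x))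
          + ENNReal.ofReal (2 * (r i' / r i))
            * (ENNReal.ofReal ((g (i', x)) ^ 2) * ENNReal.ofReal (p i' x)) := by
      intro x
      have hreal : p i x * (stAccept r p i i' x * (g (i', x) - g (i, x)) ^ 2)
          ≤ 2 * ((g (i, x)) ^ 2 * p i x)
            + 2 * (r i' / r i) * ((g (i', x)) ^ 2 * p i' x) := by
        have hsub := sq_sub_le_aux (g (i', x)) (g (i, x))
        have hstep : p i x * (stAccept r p i i' x * (g (i', x) - g (i, x)) ^ 2)
            ≤ p i x * (stAccept r p i i' x * (2 * (g (i', x)) ^ 2 + 2 * (g (i, x)) ^ 2)) := by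
          refine mul_le_mul_of_nonneg_left ?_ (hp0 i x)
          exact mul_le_mul_of_nonneg_left hsub (hacc0 i i' x)
        refine hstep.trans ?_
        have he : p i x * (stAccept r p i i' x * (2 * (g (i', x)) ^ 2 + 2 * (g (i, x)) ^ 2))
            = 2 * (g (i', x)) ^ 2 * (stAccept r p i i' x * p i x)
              + 2 * (g (i, x)) ^ 2 * (stAccept r p i i' x * p i x) := by ring
        rw [he]
        have hb1 : 2 * (g (i', x)) ^ 2 * (stAccept r p i i' x * p i x)
            ≤ 2 * (g (i', x)) ^ 2 * (r i' / r i * p i' x) :=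
          mul_le_mul_of_nonneg_left (haccp i i' x) (by positivity)
        have hb2 : 2 * (g (i, x)) ^ 2 * (stAccept r p i i' x * p i x)
            ≤ 2 * (g (i, x)) ^ 2 * p i x := by
          refine mul_le_mul_of_nonneg_left ?_ (by positivity)
          calc stAccept r p i i' x * p i x ≤ 1 * p i x :=
                mul_le_mul_of_nonneg_right (hacc1 i i' x) (hp0 i x)
            _ = p i x := one_mul _
        calc 2 * (g (i', x)) ^ 2 * (stAccept r p i i' x * p i x)
              + 2 * (g (i, x)) ^ 2 * (stAccept r p i i' x * p i x)
            ≤ 2 * (g (i', x)) ^ 2 * (r i' / r i * p i' x) + 2 * (g (i, x)) ^ 2 * p i x :=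
              add_le_add hb1 hb2
          _ = 2 * ((g (i, x)) ^ 2 * p i x) + 2 * (r i' / r i) * ((g (i', x)) ^ 2 * p i' x) := by
              ring
      have hlhs : ((fun x => ENNReal.ofReal (p i x)) * fun x =>
            ‖stAccept r p i i' x * (g (i', x) - g (i, x)) ^ 2‖ₑ) x
          = ENNReal.ofReal (p i x * (stAccept r p i i' x * (g (i', x) - g (i, x)) ^ 2)) := by
        simp only [Pi.mul_apply]
        rw [Real.enorm_eq_ofReal (hfnn x), ← ENNReal.ofReal_mul (hp0 i x)]
      rw [hlhs]
      refine le_trans (ENNReal.ofReal_le_ofReal hreal) ?_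
      rw [ENNReal.ofReal_add (mul_nonneg (by norm_num) (mul_nonneg (sq_nonneg _) (hp0 i x)))
        (mul_nonneg (mul_nonneg (by norm_num) (div_nonneg (hr i').le (hr i).le))
          (mul_nonneg (sq_nonneg _) (hp0 i' x)))]
      refine add_le_add ?_ ?_
      · rw [ENNReal.ofReal_mul (by norm_num : (0:ℝ) ≤ 2), ENNReal.ofReal_mul (sq_nonneg _)]
        simp [ENNReal.ofReal_ofNat]
      · rw [ENNReal.ofReal_mul (mul_nonneg (by norm_num) (div_nonneg (hr i').le (hr i).le)),
          ENNReal.ofReal_mul (sq_nonneg _)]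
    have hwd : ∫⁻ x, ‖stAccept r p i i' x * (g (i', x) - g (i, x)) ^ 2‖ₑ ∂(μ i)
        = ∫⁻ x, ((fun x => ENNReal.ofReal (p i x)) * fun x =>
            ‖stAccept r p i i' x * (g (i', x) - g (i, x)) ^ 2‖ₑ) x ∂ν :=
      lintegral_withDensity_eq_lintegral_mul ν (hpim i) hfm.enorm
    rw [hwd]
    have hTi : ∫⁻ x, ENNReal.ofReal ((g (i, x)) ^ 2) * ENNReal.ofReal (p i x) ∂ν = T i := by
      rw [hTdef]
      simp only [hμdef]
      rw [lintegral_withDensity_eq_lintegral_mul ν (hpim i)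
        (((hgim i i).pow_const 2).ennreal_ofReal)]
      refine lintegral_congr fun x => ?_
      simp [mul_comm]
    have hTi' : ∫⁻ x, ENNReal.ofReal ((g (i', x)) ^ 2) * ENNReal.ofReal (p i' x) ∂ν = T i' := by
      rw [hTdef]
      simp only [hμdef]
      rw [lintegral_withDensity_eq_lintegral_mul ν (hpim i')
        (((hgim i' i').pow_const 2).ennreal_ofReal)]
      refine lintegral_congr fun x => ?_
      simp [mul_comm]
    calc ∫⁻ x, ((fun x => ENNReal.ofReal (p i x)) * fun x =>
            ‖stAccept r p i i' x * (g (i', x) - g (i, x)) ^ 2‖ₑ) x ∂ν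
        ≤ ∫⁻ x, (2 * (ENNReal.ofReal ((g (i, x)) ^ 2) * ENNReal.ofReal (p i x))
            + ENNReal.ofReal (2 * (r i' / r i))
              * (ENNReal.ofReal ((g (i', x)) ^ 2) * ENNReal.ofReal (p i' x))) ∂ν :=
          lintegral_mono hptw
      _ = 2 * T i + ENNReal.ofReal (2 * (r i' / r i)) * T i' := by
          rw [lintegral_add_left ((show Measurable fun x => ENNReal.ofReal (g (i, x) ^ 2) * ENNReal.ofReal (p i x) from (((hgim i i).pow_const 2).ennreal_ofReal).mul (hpim i)).const_mul 2),
            lintegral_const_mul 2 (show Measurable fun x => ENNReal.ofReal (g (i, x) ^ 2) * ENNReal.ofReal (p i x) from (((hgim i i).pow_const 2).ennreal_ofReal).mul (hpim i)),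
            lintegral_const_mul _ (show Measurable fun x => ENNReal.ofReal (g (i', x) ^ 2) * ENNReal.ofReal (p i' x) from (((hgim i' i').pow_const 2).ennreal_ofReal).mul (hpim i')), hTi, hTi']
      _ < ⊤ := by
          refine ENNReal.add_lt_top.mpr ⟨?_, ?_⟩
          · exact ENNReal.mul_lt_top (by simp) (hT i)
          · exact ENNReal.mul_lt_top ENNReal.ofReal_lt_top (hT i')
  have hDint : ∀ i, Integrable (D i) (μ i) := by
    intro i
    refine integrable_finset_sum _ (fun i' _ => ?_)
    by_cases ha : adjacent i i'
    · simp only [ha, if_true]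
      exact (hcore i i').const_mul _
    · simp only [ha, if_false]
      exact integrable_zero _ _ _
  -- step 1: reduce the LHS to level-wise integrals
  have step1 : restDirichlet (stStat ν r p) (stKernel lam r p Mi) S g
      = (1 / 2) * ∑ i : Fin L, r i * ∫ x in X0, ((1 - lam) * A i x + D i x) ∂(μ i) := by
    have hres : restDirichlet (stStat ν r p) (stKernel lam r p Mi) S g
        = (1 / 2) * ∫ a in S, F a ∂(stStat ν r p) := rfl
    rw [hres]
    congr 1
    have hPr : (stStat ν r p).restrict S
        = ∑ i : Fin L, (ENNReal.ofReal (r i) • (((μ i).restrict X0).map (Prod.mk i))) := by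
      show (Measure.sum _).restrict S = _
      rw [Measure.restrict_sum _ hS, Measure.sum_fintype]
      refine Finset.sum_congr rfl fun i _ => ?_
      rw [Measure.restrict_smul, Measure.restrict_map measurable_prodMk_left hS]
      rfl
    have hae : ∀ i : Fin L, (fun x => (1 - lam) * A i x + D i x) =ᵐ[(μ i).restrict X0]
        fun x => F (i, x) := by
      intro i
      have h0 : ∀ᵐ x ∂((μ i).restrict X0), F (i, x) = (1 - lam) * A i x + D i x :=
        (ae_restrict_iff' hX0).mpr (keyF i)
      exact h0.mono fun x hx => hx.symm
    have hci : ∀ i : Fin L, Integrable F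
        (ENNReal.ofReal (r i) • (((μ i).restrict X0).map (Prod.mk i))) := by
      intro i
      refine Integrable.smul_measure ?_ ENNReal.ofReal_ne_top
      rw [(hφemb i).integrable_map_iff]
      exact ((((hAint i).const_mul (1 - lam)).add (hDint i)).restrict).congr (hae i)
    show ∫ a, F a ∂((stStat ν r p).restrict S) = _
    rw [hPr, integral_finset_sum_measure fun i _ => hci i]
    refine Finset.sum_congr rfl fun i _ => ?_
    rw [integral_smul_measure, ENNReal.toReal_ofReal (hr i).le, (hφemb i).integral_map,
      smul_eq_mul]
    congr 1
    exact integral_congr_ae (hae i).symm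
  -- step 2: identify the sum
  have step2 : ∀ i : Fin L, ∫ x in X0, ((1 - lam) * A i x + D i x) ∂(μ i)
      = (1 - lam) * ∫ x in X0, A i x ∂(μ i) + ∫ x in X0, D i x ∂(μ i) := by
    intro i
    rw [integral_add (((hAint i).restrict).const_mul _) ((hDint i).restrict),
      integral_const_mul]
  -- step 3: the D-integral in terms of ν
  have step3 : ∀ i : Fin L, r i * ∫ x in X0, D i x ∂(μ i)
      = ∑ i' : Fin L, if adjacent i i' then
          lam / 2 * ∫ x in X0, (g (i, x) - g (i', x)) ^ 2 * (r i * p i x) * stAccept r p i i' x ∂ν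
        else 0 := by
    intro i
    have hint : ∀ i' ∈ (Finset.univ : Finset (Fin L)), Integrable
        (fun x => if adjacent i i' then
          lam / 2 * (stAccept r p i i' x * (g (i', x) - g (i, x)) ^ 2) else 0)
        ((μ i).restrict X0) := by
      intro i' _
      by_cases ha : adjacent i i'
      · simp only [ha, if_true]
        exact (((hcore i i').const_mul _).restrict)
      · simp only [ha, if_false]
        exact integrable_zero _ _ _
    have hDsum : ∫ x in X0, D i x ∂(μ i) = ∑ i' : Fin L,
        if adjacent i i' then
          lam / 2 * ∫ x in X0, stAccept r p i i' x * (g (i', x) - g (i, x)) ^ 2 ∂(μ i)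
        else 0 := by
      simp only [hDdef]
      rw [integral_finset_sum Finset.univ hint]
      refine Finset.sum_congr rfl fun i' _ => ?_
      by_cases ha : adjacent i i'
      · simp only [ha, if_true, integral_const_mul]
      · simp only [ha, if_false, integral_zero]
    have hconv : ∀ i' : Fin L,
        r i * ∫ x in X0, stAccept r p i i' x * (g (i', x) - g (i, x)) ^ 2 ∂(μ i)
        = ∫ x in X0, (g (i, x) - g (i', x)) ^ 2 * (r i * p i x) * stAccept r p i i' x ∂ν := by
      intro i'
      have hd : (μ i) = ν.withDensity fun x => ((Real.toNNReal (p i x) : ℝ≥0) : ℝ≥0∞) := rfl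
      rw [hd, setIntegral_withDensity_eq_setIntegral_smul
        ((hpm i).real_toNNReal) _ hX0, ← integral_const_mul]
      refine integral_congr_ae (Filter.Eventually.of_forall fun x => ?_)
      simp only [NNReal.smul_def, Real.coe_toNNReal _ (hp0 i x), smul_eq_mul]
      ring
    rw [hDsum, Finset.mul_sum]
    refine Finset.sum_congr rfl fun i' _ => ?_
    by_cases ha : adjacent i i'
    · simp only [ha, if_true]
      rw [← hconv i']
      ring
    · simp only [ha, if_false, mul_zero]
  rw [step1]
  simp only [step2]
  have expand : ∑ i : Fin L, r i *
      ((1 - lam) * ∫ x in X0, A i x ∂(μ i) + ∫ x in X0, D i x ∂(μ i))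
      = (1 - lam) * ∑ i : Fin L, r i * ∫ x in X0, A i x ∂(μ i)
        + ∑ i : Fin L, r i * ∫ x in X0, D i x ∂(μ i) := by
    rw [Finset.mul_sum, ← Finset.sum_add_distrib]
    exact Finset.sum_congr rfl fun i _ => by ring
  rw [expand]
  simp only [step3]
  have hrd : ∀ i : Fin L, restDirichlet (μ i) (Mi i) X0 (fun x => g (i, x))
      = (1 / 2) * ∫ x in X0, A i x ∂(μ i) := by
    intro i
    rfl
  rw [mul_add]
  congr 1
  · simp only [hrd, Finset.mul_sum]
    exact Finset.sum_congr rfl fun i _ => by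
      rw [show restDirichlet (ν.withDensity fun x => ENNReal.ofReal (p i x)) (Mi i) X0
        (fun x => g (i, x)) = (1 / 2) * ∫ x in X0, A i x ∂(μ i) from hrd i]; ring
  · simp only [Finset.mul_sum]
    refine Finset.sum_congr rfl fun i _ => ?_
    refine Finset.sum_congr rfl fun i' _ => ?_
    by_cases ha : adjacent i i'
    · rw [if_pos ha, if_pos ha]; ring
    · rw [if_neg ha, if_neg ha]; ring
end
end

section
/- Let 0 < β ≤ 1 and let w₁,…,w_n > 0 with ∑_{i=1}^n w_i = 1. Let π₁,…,π_n be probability densities and define the normalized densities π(x) ∝ (∑_{i=1}^n w_i π_i(x))^β and π̃(x) ∝ ∑_{i=1}^n w_i π_i(x)^β. Then for all x, w_min · π̃(x) ≤ π(x) ≤ (1/w_min) · π̃(x), where w_min = min_{1≤i≤n} w_i. -/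
open MeasureTheory

lemma aux_add_rpow {a b p : ℝ} (ha : 0 ≤ a) (hb : 0 ≤ b) (hp : 0 ≤ p) (hp1 : p ≤ 1) :
    (a + b) ^ p ≤ a ^ p + b ^ p := by
  have h := NNReal.coe_le_coe.2 (NNReal.rpow_add_le_add_rpow a.toNNReal b.toNNReal hp hp1)
  simpa [NNReal.coe_rpow, Real.coe_toNNReal _ ha, Real.coe_toNNReal _ hb,
    Real.coe_toNNReal _ (add_nonneg ha hb), ← Real.toNNReal_add ha hb] using h

lemma aux_sum_rpow {ι : Type*} (s : Finset ι) (f : ι → ℝ) {p : ℝ}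
    (hp : 0 < p) (hp1 : p ≤ 1) (hf : ∀ i ∈ s, 0 ≤ f i) :
    (∑ i ∈ s, f i) ^ p ≤ ∑ i ∈ s, f i ^ p := by
  classical
  induction s using Finset.induction with
  | empty => simp [Real.zero_rpow hp.ne']
  | insert _ _ hx ih =>
    rename_i a s
    rw [Finset.sum_insert hx, Finset.sum_insert hx]
    have h1 : 0 ≤ f a := hf a (Finset.mem_insert_self a s)
    have h2 : ∀ i ∈ s, 0 ≤ f i := fun i hi => hf i (Finset.mem_insert_of_mem hi)
    calc (f a + ∑ i ∈ s, f i) ^ p ≤ f a ^ p + (∑ i ∈ s, f i) ^ p :=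
          aux_add_rpow h1 (Finset.sum_nonneg h2) hp.le hp1
      _ ≤ f a ^ p + ∑ i ∈ s, f i ^ p := by linarith [ih h2]

theorem stmt7 (d n : ℕ) (hn : 0 < n)
    (β : ℝ) (hβ0 : 0 < β) (hβ1 : β ≤ 1)
    (w : Fin n → ℝ) (hw : ∀ i, 0 < w i) (hw1 : ∑ i, w i = 1)
    (π : Fin n → (Fin d → ℝ) → ℝ)
    (hπ0 : ∀ i x, 0 ≤ π i x) (hπm : ∀ i, Measurable (π i))
    (hπ1 : ∀ i, ∫ x, π i x = 1)
    (Z Zt : ℝ)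
    (hZ : Z = ∫ x, (∑ i, w i * π i x) ^ β)
    (hZt : Zt = ∫ x, ∑ i, w i * π i x ^ β)
    (hZpos : 0 < Z) (hZtpos : 0 < Zt) :
    ∀ x, (⨅ i, w i) * ((∑ i, w i * π i x ^ β) / Zt) ≤ (∑ i, w i * π i x) ^ β / Z ∧
      (∑ i, w i * π i x) ^ β / Z ≤ (1 / ⨅ i, w i) * ((∑ i, w i * π i x ^ β) / Zt) := by
  have hne : Nonempty (Fin n) := ⟨⟨0, hn⟩⟩
  set m := ⨅ i, w i with hm
  -- basic facts about m
  have hm_le : ∀ i, m ≤ w i := fun i => ciInf_le (Finite.bddBelow_range w) i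
  obtain ⟨j, hj⟩ := Finite.exists_min w
  have hm_pos : 0 < m := lt_of_lt_of_le (hw j) (le_ciInf hj)
  have hwle1 : ∀ i, w i ≤ 1 := by
    intro i
    rw [← hw1]
    exact Finset.single_le_sum (fun i _ => (hw i).le) (Finset.mem_univ i)
  -- pointwise inequalities
  have key1 : ∀ x, ∑ i, w i * π i x ^ β ≤ (∑ i, w i * π i x) ^ β := by
    intro x
    have hp : (1 : ℝ) ≤ 1 / β := by
      rw [le_div_iff₀ hβ0]; linarith
    have h := Real.arith_mean_le_rpow_mean Finset.univ w (fun i => π i x ^ β)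
      (fun i _ => (hw i).le) hw1 (fun i _ => Real.rpow_nonneg (hπ0 i x) β) hp
    have heq : ∀ i : Fin n, (π i x ^ β) ^ (1 / β) = π i x := by
      intro i
      rw [one_div, Real.rpow_rpow_inv (hπ0 i x) hβ0.ne']
    rw [one_div_one_div] at h
    simp only [heq] at h
    exact h
  have key2 : ∀ x, (∑ i, w i * π i x) ^ β ≤ (1 / m) * ∑ i, w i * π i x ^ β := by
    intro x
    calc (∑ i, w i * π i x) ^ β
        ≤ ∑ i, (w i * π i x) ^ β :=
          aux_sum_rpow Finset.univ _ hβ0 hβ1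
            (fun i _ => mul_nonneg (hw i).le (hπ0 i x))
      _ ≤ ∑ i, (1 / m) * (w i * π i x ^ β) := by
          apply Finset.sum_le_sum
          intro i _
          rw [Real.mul_rpow (hw i).le (hπ0 i x)]
          have hwb : w i ^ β ≤ (1 / m) * w i := by
            have h1 : w i ^ β ≤ w i ^ (0:ℝ) :=
              Real.rpow_le_rpow_of_exponent_ge (hw i) (hwle1 i) hβ0.le
            rw [Real.rpow_zero] at h1
            rw [one_div]
            calc w i ^ β ≤ 1 := h1
              _ ≤ m⁻¹ * w i := by
                  rw [inv_mul_eq_div]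
                  exact (one_le_div hm_pos).2 (hm_le i)
          calc w i ^ β * π i x ^ β ≤ ((1/m) * w i) * π i x ^ β :=
                mul_le_mul_of_nonneg_right hwb (Real.rpow_nonneg (hπ0 i x) β)
            _ = (1 / m) * (w i * π i x ^ β) := by ring
      _ = (1 / m) * ∑ i, w i * π i x ^ β := by rw [Finset.mul_sum]
  -- integrability
  have hintf : Integrable (fun x : Fin d → ℝ => (∑ i, w i * π i x) ^ β) := by
    by_contra h
    rw [integral_undef h] at hZ
    exact hZpos.ne' (hZ)
  have hintg : Integrable (fun x : Fin d → ℝ => ∑ i, w i * π i x ^ β) := by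
    by_contra h
    rw [integral_undef h] at hZt
    exact hZtpos.ne' (hZt)
  -- integral comparisons
  have hZtZ : Zt ≤ Z := by
    rw [hZ, hZt]
    exact integral_mono hintg hintf key1
  have hZZ : Z ≤ (1 / m) * Zt := by
    rw [hZ, hZt, ← integral_const_mul]
    exact integral_mono hintf (hintg.const_mul _) key2
  intro x
  have h1 := key1 x
  have h2 := key2 x
  set S := (∑ i, w i * π i x) ^ β with hS
  set St := ∑ i, w i * π i x ^ β with hSt
  have hSt0 : 0 ≤ St :=
    Finset.sum_nonneg fun i _ => mul_nonneg (hw i).le (Real.rpow_nonneg (hπ0 i x) β)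
  have hS0 : 0 ≤ S := Real.rpow_nonneg (Finset.sum_nonneg
    (fun i _ => mul_nonneg (hw i).le (hπ0 i x))) β
  rw [one_div, inv_mul_eq_div, le_div_iff₀ hm_pos] at hZZ h2
  constructor
  · rw [← mul_div_assoc, div_le_div_iff₀ hZtpos hZpos]
    nlinarith [mul_le_mul_of_nonneg_left hZZ hSt0, mul_le_mul_of_nonneg_right h1 hZtpos.le]
  · rw [one_div, inv_mul_eq_div, div_div, div_le_div_iff₀ hZpos (mul_pos hZtpos hm_pos)]
    nlinarith [mul_le_mul_of_nonneg_right h2 hZtpos.le, mul_le_mul_of_nonneg_left hZtZ hSt0]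
end
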